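/- Let (M,P,μ,φ) be a crossed module and let M₀ = inl(M) be the canonical copy of M in the semidirect product M ⋊ P. Then the commutator subgroup ⁅⊤, M₀⁆ of M ⋊ P (generated by commutators of arbitrary elements of M ⋊ P with elements of M₀) equals inl([P,M]), the canonical copy of [P,M]. In other words, [M ⋊ P, M] = [P,M]. -/

import Mathlib

/-- `[P,M]`: the subgroup of `M` generated by the elements `ᵖm·m⁻¹`,
for an action `φ` of `P` on `M`. -/
def actionCommutator {M P : Type*} [Group M] [Group P] (φ : P →* MulAut M) : Subgroup M :=
  Subgroup.closure {x : M | ∃ (p : P) (m : M), x = φ p m * m⁻¹}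

lemma mem_actionCommutator_gen {M P : Type*} [Group M] [Group P] (φ : P →* MulAut M)
    (p : P) (m : M) : φ p m * m⁻¹ ∈ actionCommutator φ :=
  Subgroup.subset_closure ⟨p, m, rfl⟩

lemma actionCommutator_smul_mem {M P : Type*} [Group M] [Group P] (φ : P →* MulAut M)
    (q : P) {x : M} (hx : x ∈ actionCommutator φ) : φ q x ∈ actionCommutator φ := by
  induction hx using Subgroup.closure_induction with
  | mem y hy =>
    obtain ⟨p, m, rfl⟩ := hy
    have h : φ q (φ p m * m⁻¹) = (φ (q * p) m * m⁻¹) * (φ q m * m⁻¹)⁻¹ := by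
      simp [map_mul, MulAut.mul_apply, mul_assoc]
    rw [h]
    exact mul_mem (mem_actionCommutator_gen φ _ _)
      (inv_mem (mem_actionCommutator_gen φ _ _))
  | one => simpa using one_mem _
  | mul a b _ _ ha hb => rw [map_mul]; exact mul_mem ha hb
  | inv a _ ha => rw [map_inv]; exact inv_mem ha

open scoped commutatorElement

/-- For a crossed module `(M,P,μ,φ)`, the commutator subgroup `[M ⋊ P, M]` of the
semidirect product with the canonical copy `M₀ = inl(M)` of `M` equals `inl([P,M])`. -/
theorem commutator_semidirectProduct_inl_of_crossedModule
    (M P : Type*) [Group M] [Group P] (φ : P →* MulAut M) (μ : M →* P)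
    (hcm1 : ∀ (p : P) (m : M), μ (φ p m) = p * μ m * p⁻¹)
    (hcm2 : ∀ (m m' : M), φ (μ m) m' = m * m' * m⁻¹) :
    ⁅(⊤ : Subgroup (M ⋊[φ] P)), (SemidirectProduct.inl : M →* M ⋊[φ] P).range⁆ =
      Subgroup.map (SemidirectProduct.inl : M →* M ⋊[φ] P) (actionCommutator φ) := by
  have key : ∀ (g : M ⋊[φ] P) (m : M),
      ⁅g, (SemidirectProduct.inl m : M ⋊[φ] P)⁆ =
        SemidirectProduct.inl (g.left * φ g.right m * g.left⁻¹ * m⁻¹) := by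
    intro g m
    ext <;> simp [commutatorElement_def, mul_assoc]
  apply le_antisymm
  · rw [Subgroup.commutator_le]
    rintro g - x ⟨m, rfl⟩
    rw [key]
    refine ⟨g.left * φ g.right m * g.left⁻¹ * m⁻¹, ?_, rfl⟩
    have h1 : g.left * (φ g.right m * m⁻¹) * g.left⁻¹ ∈ actionCommutator φ := by
      rw [← hcm2]
      exact actionCommutator_smul_mem φ _ (mem_actionCommutator_gen φ _ _)
    have h2 : g.left * m * g.left⁻¹ * m⁻¹ ∈ actionCommutator φ := by
      have := mem_actionCommutator_gen φ (μ g.left) m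
      rwa [hcm2] at this
    have heq : g.left * φ g.right m * g.left⁻¹ * m⁻¹ =
        (g.left * (φ g.right m * m⁻¹) * g.left⁻¹) * (g.left * m * g.left⁻¹ * m⁻¹) := by
      group
    rw [heq]
    exact mul_mem h1 h2
  · rw [Subgroup.map_le_iff_le_comap, actionCommutator, Subgroup.closure_le]
    rintro x ⟨p, m, rfl⟩
    simp only [SetLike.mem_coe, Subgroup.mem_comap]
    have h : (SemidirectProduct.inl (φ p m * m⁻¹) : M ⋊[φ] P) =
        ⁅(SemidirectProduct.inr p : M ⋊[φ] P), SemidirectProduct.inl m⁆ := by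
      rw [key]; simp
    rw [h]
    exact Subgroup.commutator_mem_commutator (Subgroup.mem_top _) ⟨m, rfl⟩
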